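/- Let (G₁,w₁) and (G₂,w₂) be finite vertex-weighted graphs. If there exists a surjective weight-homomorphism from (G₁,w₁) to (G₂,w₂) and a surjective weight-homomorphism from (G₂,w₂) to (G₁,w₁), then |V(G₁)| = |V(G₂)| and every surjective weight-homomorphism ψ from (G₁,w₁) to (G₂,w₂) is a graph isomorphism from G₁ to G₂. -/
import Mathlib


/-- `ψ` is a weight-homomorphism from `(G₁, w₁)` to `(G₂, w₂)`: a graph homomorphism
such that, for every vertex `v` of `G₂`, the total `w₁`-weight of the fiber `ψ⁻¹(v)` is
at most `w₂ v`. -/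
def IsWtHom {α β : Type} [Fintype α] [DecidableEq β]
    (G₁ : SimpleGraph α) (w₁ : α → ℕ) (G₂ : SimpleGraph β) (w₂ : β → ℕ)
    (ψ : G₁ →g G₂) : Prop :=
  ∀ v : β, ∑ u ∈ Finset.univ.filter (fun u => ψ u = v), w₁ u ≤ w₂ v

lemma adj_reflect_of_bijective {α : Type} [Fintype α] (G : SimpleGraph α)
    (θ : G →g G) (hθ : Function.Bijective θ) :
    ∀ u v, G.Adj (θ u) (θ v) → G.Adj u v := by
  let e : Equiv.Perm α := Equiv.ofBijective θ hθ
  have hmap : ∀ k (u v : α), G.Adj u v → G.Adj ((e ^ k) u) ((e ^ k) v) := by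
    intro k
    induction k with
    | zero => simp
    | succ n ih =>
      intro u v h
      have h' : G.Adj (e u) (e v) := θ.map_adj h
      have := ih (e u) (e v) h'
      simpa [pow_succ, Equiv.Perm.mul_apply] using this
  intro u v h
  have hn : 0 < orderOf e := orderOf_pos e
  have h' : G.Adj ((e ^ (orderOf e - 1)) (e u)) ((e ^ (orderOf e - 1)) (e v)) :=
    hmap (orderOf e - 1) (e u) (e v) h
  have key : e ^ (orderOf e - 1) * e = 1 := by
    rw [← pow_succ, Nat.sub_add_cancel hn, pow_orderOf_eq_one]
  simpa [← Equiv.Perm.mul_apply, key] using h'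

/-- If there are surjective weight-homomorphisms between `(G₁, w₁)` and `(G₂, w₂)` in
both directions, then the vertex sets have the same cardinality and every surjective
weight-homomorphism from `(G₁, w₁)` to `(G₂, w₂)` is a graph isomorphism. -/
theorem stmt_4 {α β : Type} [Fintype α] [Fintype β] [DecidableEq α] [DecidableEq β]
    (G₁ : SimpleGraph α) (w₁ : α → ℕ) (hw₁ : ∀ v, 0 < w₁ v)
    (G₂ : SimpleGraph β) (w₂ : β → ℕ) (hw₂ : ∀ v, 0 < w₂ v)
    (h₁ : ∃ ψ : G₁ →g G₂, Function.Surjective ψ ∧ IsWtHom G₁ w₁ G₂ w₂ ψ)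
    (h₂ : ∃ ψ : G₂ →g G₁, Function.Surjective ψ ∧ IsWtHom G₂ w₂ G₁ w₁ ψ) :
    Fintype.card α = Fintype.card β ∧
      ∀ ψ : G₁ →g G₂, Function.Surjective ψ → IsWtHom G₁ w₁ G₂ w₂ ψ →
        Function.Bijective ψ ∧ ∀ u v, G₁.Adj u v ↔ G₂.Adj (ψ u) (ψ v) := by
  obtain ⟨ψ₀, hψ₀s, -⟩ := h₁
  obtain ⟨φ, hφs, -⟩ := h₂
  have hcard : Fintype.card α = Fintype.card β :=
    le_antisymm (Fintype.card_le_of_surjective φ hφs)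
      (Fintype.card_le_of_surjective ψ₀ hψ₀s)
  refine ⟨hcard, fun ψ hψs _ => ?_⟩
  have hψb : Function.Bijective ψ :=
    (Fintype.bijective_iff_surjective_and_card ψ).2 ⟨hψs, hcard⟩
  have hφb : Function.Bijective φ :=
    (Fintype.bijective_iff_surjective_and_card φ).2 ⟨hφs, hcard.symm⟩
  have hθb : Function.Bijective (φ.comp ψ) := by
    simpa [SimpleGraph.Hom.comp] using hφb.comp hψb
  refine ⟨hψb, fun u v => ⟨fun h => ψ.map_adj h, fun h => ?_⟩⟩
  exact adj_reflect_of_bijective G₁ (φ.comp ψ) hθb u v (φ.map_adj h)
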